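/- In the 3SAT reduction of the IMT hardness proof: given a satisfying assignment f of the 3SAT instance, the edge set Z consisting of all border edges x_j C_h with f(x_j) = 1 and all border edges x̄_j C_h with f(x_j) = 0 is a selection (each clause vertex C_h is covered), and for every j at most one of the stars at x_j and x̄_j meets Z, so that the private neighbor x_j x̄_j edges of T retain private neighbors; hence some subset Z' ⊆ Z makes T ∪ Z' a minimal transversal of E_i. Conversely, from any selection Z with T ∪ Z ∈ tr(E_i), the assignment f(x_j) = 1 iff Z meets the star of x_j is well-defined and satisfies all clauses. -/
import Mathlib


/-- Two edges (as unordered pairs) are adjacent if they share an endpoint. -/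
def eAdj {V : Type*} (e f : Sym2 V) : Prop := ∃ v, v ∈ e ∧ v ∈ f

/-- `T` is a transversal of the edge set `E'`. -/
def TrOf {V : Type*} (E' T : Set (Sym2 V)) : Prop := ∀ e ∈ E', ∃ f ∈ T, eAdj e f

/-- Private neighbors of `e` w.r.t. `T` within `E'`. -/
def PrivE {V : Type*} (E' : Set (Sym2 V)) (e : Sym2 V) (T : Set (Sym2 V)) : Set (Sym2 V) :=
  {f ∈ E' | eAdj e f ∧ ∀ g ∈ T \ {e}, ¬ eAdj f g}

/-- `T` is a minimal transversal of `E'`. -/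
def MinTrOf {V : Type*} (E' T : Set (Sym2 V)) : Prop :=
  TrOf E' T ∧ ∀ e ∈ T, (PrivE E' e T).Nonempty

/-- The vertices of the IMT-hardness reduction: literal vertices `pos j`, `neg j`,
clause vertices `cls h`, pendant vertices `zv j`, `yv j`, and `w`, `x`, `y`. -/
inductive RVert (n m : ℕ) : Type where
  | pos (j : Fin n) | neg (j : Fin n) | cls (h : Fin m)
  | zv (j : Fin n) | yv (j : Fin n) | w | x | y
deriving DecidableEq

open RVert

/-- The edge set `E_{i-1}` of the reduction. -/
def Eprev {n m : ℕ} (C : Fin m → Finset (Fin n × Bool)) : Set (Sym2 (RVert n m)) :=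
  {e | (∃ j h, (j, true) ∈ C h ∧ e = s(pos j, cls h)) ∨
       (∃ j h, (j, false) ∈ C h ∧ e = s(neg j, cls h)) ∨
       (∃ j, e = s(pos j, zv j)) ∨ (∃ j, e = s(neg j, yv j)) ∨
       (∃ j, e = s(pos j, neg j))}

/-- The edge set `E_i` of the reduction: `E_{i-1}` plus the edges `y C_h`, `xy`, `xw`. -/
def Ecur {n m : ℕ} (C : Fin m → Finset (Fin n × Bool)) : Set (Sym2 (RVert n m)) :=
  Eprev C ∪ {e | (∃ h, e = s(y, cls h)) ∨ e = s(x, y) ∨ e = s(x, w)}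

/-- The transversal `T = {x_j x̄_j : j ≤ n} ∪ {xw}` of the reduction. -/
def Tred (n m : ℕ) : Set (Sym2 (RVert n m)) :=
  {e | (∃ j, e = s(pos j, neg j)) ∨ e = s(x, w)}

/-- The border edges of the reduction: the literal–clause edges. -/
def BdRed {n m : ℕ} (C : Fin m → Finset (Fin n × Bool)) : Set (Sym2 (RVert n m)) :=
  {e | (∃ j h, (j, true) ∈ C h ∧ e = s(pos j, cls h)) ∨
       (∃ j h, (j, false) ∈ C h ∧ e = s(neg j, cls h))}

/-- Selections of the reduction: sets of border edges with exactly one edge incident to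
each (free) clause vertex `C_h`. -/
def SelRed {n m : ℕ} (C : Fin m → Finset (Fin n × Bool)) (Z : Set (Sym2 (RVert n m))) :
    Prop :=
  Z ⊆ BdRed C ∧ ∀ h : Fin m, ∃! e, e ∈ Z ∧ cls h ∈ e

open Classical

/-- The set of border edges at true literals. -/
abbrev ZS {n m : ℕ} (C : Fin m → Finset (Fin n × Bool)) (f : Fin n → Bool) :
    Set (Sym2 (RVert n m)) :=
  {e | (∃ j h', (j, true) ∈ C h' ∧ f j = true ∧ e = s(pos j, cls h')) ∨
       (∃ j h', (j, false) ∈ C h' ∧ f j = false ∧ e = s(neg j, cls h'))}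

lemma zs_cover {n m : ℕ} (C : Fin m → Finset (Fin n × Bool)) (f : Fin n → Bool)
    (hf : ∀ h, ∃ l ∈ C h, f l.1 = l.2) :
    ∀ h : Fin m, ∃ e ∈ ZS C f, cls h ∈ e := by
  intro h
  obtain ⟨⟨j, b⟩, hl, hfl⟩ := hf h
  cases b with
  | true => exact ⟨s(pos j, cls h), Or.inl ⟨j, h, hl, hfl, rfl⟩, by simp⟩
  | false => exact ⟨s(neg j, cls h), Or.inr ⟨j, h, hl, hfl, rfl⟩, by simp⟩

lemma zs_not_both {n m : ℕ} (C : Fin m → Finset (Fin n × Bool)) (f : Fin n → Bool) :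
    ∀ j : Fin n, ¬((∃ e ∈ ZS C f, pos j ∈ e) ∧ (∃ e ∈ ZS C f, neg j ∈ e)) := by
  rintro j ⟨⟨e1, he1, hp⟩, ⟨e2, he2, hn⟩⟩
  have h1 : f j = true := by
    rcases he1 with ⟨j', h', _, hfj, rfl⟩ | ⟨j', h', _, hfj, rfl⟩ <;>
      simp only [Sym2.mem_iff] at hp
    · rcases hp with hp | hp
      · rwa [RVert.pos.inj hp]
      · exact absurd hp (by simp)
    · rcases hp with hp | hp <;> exact absurd hp (by simp)
  have h2 : f j = false := by
    rcases he2 with ⟨j', h', _, hfj, rfl⟩ | ⟨j', h', _, hfj, rfl⟩ <;>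
      simp only [Sym2.mem_iff] at hn
    · rcases hn with hn | hn <;> exact absurd hn (by simp)
    · rcases hn with hn | hn
      · rwa [RVert.neg.inj hn]
      · exact absurd hn (by simp)
  simp [h1] at h2

lemma zs_min {n m : ℕ} (C : Fin m → Finset (Fin n × Bool)) (f : Fin n → Bool)
    (hf : ∀ h, ∃ l ∈ C h, f l.1 = l.2) :
    ∃ Z' ⊆ ZS C f, MinTrOf (Ecur C) (Tred n m ∪ Z') := by
  choose g hg1 hg2 using zs_cover C f hf
  have hst : ∀ h : Fin m, ∃ j,
      (f j = true ∧ (j, true) ∈ C h ∧ g h = s(pos j, cls h)) ∨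
      (f j = false ∧ (j, false) ∈ C h ∧ g h = s(neg j, cls h)) := by
    intro h
    have hc := hg2 h
    rcases hg1 h with ⟨j, h', hC, hfj, he⟩ | ⟨j, h', hC, hfj, he⟩
    · rw [he] at hc
      have hh : h' = h := by
        simp only [Sym2.mem_iff] at hc
        rcases hc with hc | hc
        · exact absurd hc (by simp)
        · exact (RVert.cls.inj hc).symm
      subst hh
      exact ⟨j, Or.inl ⟨hfj, hC, he⟩⟩
    · rw [he] at hc
      have hh : h' = h := by
        simp only [Sym2.mem_iff] at hc
        rcases hc with hc | hc
        · exact absurd hc (by simp)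
        · exact (RVert.cls.inj hc).symm
      subst hh
      exact ⟨j, Or.inr ⟨hfj, hC, he⟩⟩
  refine ⟨Set.range g, ?_, ?_, ?_⟩
  · rintro e ⟨h, rfl⟩; exact hg1 h
  · -- transversality
    rintro e (he | he)
    · rcases he with ⟨j, h, hC, rfl⟩ | ⟨j, h, hC, rfl⟩ | ⟨j, rfl⟩ | ⟨j, rfl⟩ | ⟨j, rfl⟩
      · exact ⟨g h, Or.inr ⟨h, rfl⟩, cls h, by simp, hg2 h⟩
      · exact ⟨g h, Or.inr ⟨h, rfl⟩, cls h, by simp, hg2 h⟩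
      · exact ⟨s(pos j, neg j), Or.inl (Or.inl ⟨j, rfl⟩), pos j, by simp, by simp⟩
      · exact ⟨s(pos j, neg j), Or.inl (Or.inl ⟨j, rfl⟩), neg j, by simp, by simp⟩
      · exact ⟨s(pos j, neg j), Or.inl (Or.inl ⟨j, rfl⟩), pos j, by simp, by simp⟩
    · rcases he with ⟨h, rfl⟩ | rfl | rfl
      · exact ⟨g h, Or.inr ⟨h, rfl⟩, cls h, by simp, hg2 h⟩
      · exact ⟨s(x, w), Or.inl (Or.inr rfl), x, by simp, by simp⟩
      · exact ⟨s(x, w), Or.inl (Or.inr rfl), x, by simp, by simp⟩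
  · -- minimality
    rintro e ((⟨j, rfl⟩ | rfl) | ⟨h, rfl⟩)
    · -- e = s(pos j, neg j)
      cases hfj : f j with
      | false =>
        refine ⟨s(pos j, zv j), Or.inl (Or.inr (Or.inr (Or.inl ⟨j, rfl⟩))),
          ⟨pos j, by simp, by simp⟩, ?_⟩
        rintro g' ⟨hg', hne⟩ ⟨v, hv1, hv2⟩
        rcases hg' with ((⟨j', rfl⟩ | rfl) | ⟨h, rfl⟩)
        · have hjj : j' ≠ j := by rintro rfl; exact hne rfl
          simp only [Sym2.mem_iff] at hv1 hv2
          rcases hv1 with rfl | rfl <;> rcases hv2 with hv | hv <;> simp_all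
        · simp only [Sym2.mem_iff] at hv1 hv2
          rcases hv1 with rfl | rfl <;> rcases hv2 with hv | hv <;> simp_all
        · obtain ⟨j2, hc⟩ := hst h
          rcases hc with ⟨hf2, _, hgh⟩ | ⟨hf2, _, hgh⟩ <;> rw [hgh] at hv2 <;>
            simp only [Sym2.mem_iff] at hv1 hv2 <;>
            rcases hv1 with rfl | rfl <;> rcases hv2 with hv | hv <;> simp_all
      | true =>
        refine ⟨s(neg j, yv j), Or.inl (Or.inr (Or.inr (Or.inr (Or.inl ⟨j, rfl⟩)))),
          ⟨neg j, by simp, by simp⟩, ?_⟩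
        rintro g' ⟨hg', hne⟩ ⟨v, hv1, hv2⟩
        rcases hg' with ((⟨j', rfl⟩ | rfl) | ⟨h, rfl⟩)
        · have hjj : j' ≠ j := by rintro rfl; exact hne rfl
          simp only [Sym2.mem_iff] at hv1 hv2
          rcases hv1 with rfl | rfl <;> rcases hv2 with hv | hv <;> simp_all
        · simp only [Sym2.mem_iff] at hv1 hv2
          rcases hv1 with rfl | rfl <;> rcases hv2 with hv | hv <;> simp_all
        · obtain ⟨j2, hc⟩ := hst h
          rcases hc with ⟨hf2, _, hgh⟩ | ⟨hf2, _, hgh⟩ <;> rw [hgh] at hv2 <;>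
            simp only [Sym2.mem_iff] at hv1 hv2 <;>
            rcases hv1 with rfl | rfl <;> rcases hv2 with hv | hv <;> simp_all
    · -- e = s(x, w)
      refine ⟨s(x, y), Or.inr (Or.inr (Or.inl rfl)), ⟨x, by simp, by simp⟩, ?_⟩
      rintro g' ⟨hg', hne⟩ ⟨v, hv1, hv2⟩
      rcases hg' with ((⟨j', rfl⟩ | rfl) | ⟨h, rfl⟩)
      · simp only [Sym2.mem_iff] at hv1 hv2
        rcases hv1 with rfl | rfl <;> rcases hv2 with hv | hv <;> simp_all
      · exact hne rfl
      · obtain ⟨j2, hc⟩ := hst h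
        rcases hc with ⟨hf2, _, hgh⟩ | ⟨hf2, _, hgh⟩ <;> rw [hgh] at hv2 <;>
          simp only [Sym2.mem_iff] at hv1 hv2 <;>
          rcases hv1 with rfl | rfl <;> rcases hv2 with hv | hv <;> simp_all
    · -- e = g h
      refine ⟨s(y, cls h), Or.inr (Or.inl ⟨h, rfl⟩), ⟨cls h, hg2 h, by simp⟩, ?_⟩
      rintro g' ⟨hg', hne⟩ ⟨v, hv1, hv2⟩
      rcases hg' with ((⟨j', rfl⟩ | rfl) | ⟨h', rfl⟩)
      · simp only [Sym2.mem_iff] at hv1 hv2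
        rcases hv1 with rfl | rfl <;> rcases hv2 with hv | hv <;> simp_all
      · simp only [Sym2.mem_iff] at hv1 hv2
        rcases hv1 with rfl | rfl <;> rcases hv2 with hv | hv <;> simp_all
      · obtain ⟨j2, hc⟩ := hst h'
        rcases hc with ⟨hf2, _, hgh⟩ | ⟨hf2, _, hgh⟩ <;> rw [hgh] at hv2 <;>
          simp only [Sym2.mem_iff] at hv1 hv2 <;>
          rcases hv1 with rfl | rfl <;> rcases hv2 with hv | hv <;> simp_all

lemma imt_part2 {n m : ℕ} (C : Fin m → Finset (Fin n × Bool)) :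
    ∀ Z : Set (Sym2 (RVert n m)), SelRed C Z → MinTrOf (Ecur C) (Tred n m ∪ Z) →
      ∃ f : Fin n → Bool,
        (∀ j, (∃ e ∈ Z, pos j ∈ e) → f j = true) ∧
        (∀ j, (∃ e ∈ Z, neg j ∈ e) → f j = false) ∧
        (∀ h, ∃ l ∈ C h, f l.1 = l.2) := by
  rintro Z ⟨hZB, hZsel⟩ ⟨-, hmin⟩
  classical
  have key : ∀ j : Fin n, ¬((∃ e ∈ Z, pos j ∈ e) ∧ (∃ e ∈ Z, neg j ∈ e)) := by
    rintro j ⟨⟨e1, he1, hp⟩, ⟨e2, he2, hn⟩⟩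
    obtain ⟨h1, rfl⟩ : ∃ h1, e1 = s(pos j, cls h1) := by
      rcases hZB he1 with ⟨j', h', hC, rfl⟩ | ⟨j', h', hC, rfl⟩ <;>
        simp only [Sym2.mem_iff] at hp
      · rcases hp with hp | hp
        · exact ⟨h', by rw [RVert.pos.inj hp]⟩
        · exact absurd hp (by simp)
      · rcases hp with hp | hp <;> exact absurd hp (by simp)
    obtain ⟨h2, rfl⟩ : ∃ h2, e2 = s(neg j, cls h2) := by
      rcases hZB he2 with ⟨j', h', hC, rfl⟩ | ⟨j', h', hC, rfl⟩ <;>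
        simp only [Sym2.mem_iff] at hn
      · rcases hn with hn | hn <;> exact absurd hn (by simp)
      · rcases hn with hn | hn
        · exact ⟨h', by rw [RVert.neg.inj hn]⟩
        · exact absurd hn (by simp)
    obtain ⟨p, hpE, hpadj, hppriv⟩ := hmin s(pos j, neg j) (Or.inl (Or.inl ⟨j, rfl⟩))
    have hcls : ∀ h' : Fin m, cls h' ∉ p := by
      intro h' hmem
      obtain ⟨ez, ⟨hez, hezc⟩, -⟩ := hZsel h'
      have hezne : ez ≠ s(pos j, neg j) := by
        rintro rfl
        simp only [Sym2.mem_iff] at hezc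
        rcases hezc with hc | hc <;> exact absurd hc (by simp)
      exact hppriv ez ⟨Or.inr hez, hezne⟩ ⟨cls h', hmem, hezc⟩
    have hne1 : s(pos j, cls h1) ≠ s(pos j, neg j) := by simp [Sym2.eq_iff]
    have hne2 : s(neg j, cls h2) ≠ s(pos j, neg j) := by simp [Sym2.eq_iff]
    obtain ⟨v, hv1, hv2⟩ := hpadj
    rcases hpE with (⟨j', h', _, rfl⟩ | ⟨j', h', _, rfl⟩ | ⟨j', rfl⟩ | ⟨j', rfl⟩ | ⟨j', rfl⟩) |
      (⟨h', rfl⟩ | rfl | rfl)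
    · exact hcls h' (by simp)
    · exact hcls h' (by simp)
    · -- p = s(pos j', zv j')
      have hj : j' = j := by
        simp only [Sym2.mem_iff] at hv1 hv2
        rcases hv1 with rfl | rfl
        · rcases hv2 with hv | hv
          · exact (RVert.pos.inj hv).symm
          · exact absurd hv (by simp)
        · rcases hv2 with hv | hv <;> exact absurd hv (by simp)
      subst hj
      exact hppriv s(pos j', cls h1) ⟨Or.inr he1, hne1⟩ ⟨pos j', by simp, by simp⟩
    · -- p = s(neg j', yv j')
      have hj : j' = j := by
        simp only [Sym2.mem_iff] at hv1 hv2
        rcases hv1 with rfl | rfl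
        · rcases hv2 with hv | hv <;> exact absurd hv (by simp)
        · rcases hv2 with hv | hv
          · exact (RVert.neg.inj hv).symm
          · exact absurd hv (by simp)
      subst hj
      exact hppriv s(neg j', cls h2) ⟨Or.inr he2, hne2⟩ ⟨neg j', by simp, by simp⟩
    · -- p = s(pos j', neg j')
      have hj : j' = j := by
        simp only [Sym2.mem_iff] at hv1 hv2
        rcases hv1 with rfl | rfl
        · rcases hv2 with hv | hv
          · exact (RVert.pos.inj hv).symm
          · exact absurd hv (by simp)
        · rcases hv2 with hv | hv
          · exact absurd hv (by simp)
          · exact (RVert.neg.inj hv).symm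
      subst hj
      exact hppriv s(pos j', cls h1) ⟨Or.inr he1, hne1⟩ ⟨pos j', by simp, by simp⟩
    · exact hcls h' (by simp)
    · simp only [Sym2.mem_iff] at hv1 hv2
      rcases hv1 with rfl | rfl <;> rcases hv2 with hv | hv <;> simp_all
    · simp only [Sym2.mem_iff] at hv1 hv2
      rcases hv1 with rfl | rfl <;> rcases hv2 with hv | hv <;> simp_all
  refine ⟨fun j => if (∃ e ∈ Z, pos j ∈ e) then true else false, ?_, ?_, ?_⟩
  · intro j hj; simp [hj]
  · intro j hj
    have hnp : ¬ (∃ e ∈ Z, pos j ∈ e) := fun hp => key j ⟨hp, hj⟩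
    simp [hnp]
  · intro h
    obtain ⟨ez, ⟨hez, hezc⟩, -⟩ := hZsel h
    rcases hZB hez with ⟨j', h', hC, rfl⟩ | ⟨j', h', hC, rfl⟩
    · have hh : h' = h := by
        simp only [Sym2.mem_iff] at hezc
        rcases hezc with hc | hc
        · exact absurd hc (by simp)
        · exact (RVert.cls.inj hc).symm
      subst hh
      refine ⟨(j', true), hC, ?_⟩
      have hp : ∃ e ∈ Z, pos j' ∈ e := ⟨_, hez, by simp⟩
      simp [hp]
    · have hh : h' = h := by
        simp only [Sym2.mem_iff] at hezc
        rcases hezc with hc | hc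
        · exact absurd hc (by simp)
        · exact (RVert.cls.inj hc).symm
      subst hh
      refine ⟨(j', false), hC, ?_⟩
      have hneg : ∃ e ∈ Z, neg j' ∈ e := ⟨_, hez, by simp⟩
      have hnp : ¬ (∃ e ∈ Z, pos j' ∈ e) := fun hp => key j' ⟨hp, hneg⟩
      simp [hnp]

/-- correctness of the 3SAT reduction. Given a satisfying assignment `f`,
the set `Z` of all border edges at true literals covers every clause vertex, meets at
most one of the stars at `x_j` and `x̄_j` for each `j`, and some subset `Z' ⊆ Z` makes
`T ∪ Z'` a minimal transversal of `E_i`. Conversely, from any selection `Z` with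
`T ∪ Z ∈ tr(E_i)` one obtains a well-defined satisfying assignment (`f(x_j) = 1` iff `Z`
meets the star of `x_j`). -/
theorem imt_reduction_correct (n m : ℕ) (C : Fin m → Finset (Fin n × Bool)) :
    (∀ f : Fin n → Bool, (∀ h, ∃ l ∈ C h, f l.1 = l.2) →
      (∀ h : Fin m, ∃ e ∈ {e : Sym2 (RVert n m) |
          (∃ j h', (j, true) ∈ C h' ∧ f j = true ∧ e = s(pos j, cls h')) ∨
          (∃ j h', (j, false) ∈ C h' ∧ f j = false ∧ e = s(neg j, cls h'))},
        cls h ∈ e) ∧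
      (∀ j : Fin n, ¬ ((∃ e ∈ {e : Sym2 (RVert n m) |
          (∃ j' h', (j', true) ∈ C h' ∧ f j' = true ∧ e = s(pos j', cls h')) ∨
          (∃ j' h', (j', false) ∈ C h' ∧ f j' = false ∧ e = s(neg j', cls h'))},
          pos j ∈ e) ∧
        (∃ e ∈ {e : Sym2 (RVert n m) |
          (∃ j' h', (j', true) ∈ C h' ∧ f j' = true ∧ e = s(pos j', cls h')) ∨
          (∃ j' h', (j', false) ∈ C h' ∧ f j' = false ∧ e = s(neg j', cls h'))},
          neg j ∈ e))) ∧
      (∃ Z' ⊆ {e : Sym2 (RVert n m) |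
          (∃ j h', (j, true) ∈ C h' ∧ f j = true ∧ e = s(pos j, cls h')) ∨
          (∃ j h', (j, false) ∈ C h' ∧ f j = false ∧ e = s(neg j, cls h'))},
        MinTrOf (Ecur C) (Tred n m ∪ Z'))) ∧
    (∀ Z : Set (Sym2 (RVert n m)), SelRed C Z → MinTrOf (Ecur C) (Tred n m ∪ Z) →
      ∃ f : Fin n → Bool,
        (∀ j, (∃ e ∈ Z, pos j ∈ e) → f j = true) ∧
        (∀ j, (∃ e ∈ Z, neg j ∈ e) → f j = false) ∧
        (∀ h, ∃ l ∈ C h, f l.1 = l.2)) := by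
  exact ⟨fun f hf => ⟨zs_cover C f hf, zs_not_both C f, zs_min C f hf⟩, imt_part2 C⟩
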